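/- Let G be a balanced bipartite graph on 2n vertices with minimum degree δ(G) ≥ k, where 1 ≤ k ≤ n/2. If e(G) > max{ n(n-k) + k², n(n - ⌊n/2⌋) + ⌊n/2⌋² }, then G is Hamiltonian. -/

import Mathlib

open SimpleGraph

attribute [local instance] Classical.propDecidable

/-- The (adjacency) spectral radius of a graph, as the largest adjacency eigenvalue. -/
noncomputable def specRad {V : Type*} [Fintype V] [DecidableEq V] (G : SimpleGraph V) : ℝ :=
  sSup (spectrum ℝ (G.adjMatrix ℝ))

/-- The signless Laplacian matrix `Q = D + A` of a graph. -/
noncomputable def signlessLaplacian {V : Type*} [Fintype V] [DecidableEq V]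
    (G : SimpleGraph V) : Matrix V V ℝ :=
  Matrix.diagonal (fun v => (G.degree v : ℝ)) + G.adjMatrix ℝ

/-- The signless Laplacian spectral radius of a graph. -/
noncomputable def qSpec {V : Type*} [Fintype V] [DecidableEq V] (G : SimpleGraph V) : ℝ :=
  sSup (spectrum ℝ (signlessLaplacian G))

/-- A graph is traceable if it has a Hamilton path. -/
def SimpleGraph.IsTraceable {V : Type*} (G : SimpleGraph V) : Prop :=
  ∃ (u v : V) (p : G.Walk u v), p.IsHamiltonian

/-- A graph on `Fin m ⊕ Fin n` is bipartite with bipartition `{Fin m, Fin n}`: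
all edges go between the two parts. -/
def CrossOnly {m n : ℕ} (G : SimpleGraph (Fin m ⊕ Fin n)) : Prop :=
  (∀ x y : Fin m, ¬ G.Adj (Sum.inl x) (Sum.inl y)) ∧
  (∀ x y : Fin n, ¬ G.Adj (Sum.inr x) (Sum.inr y))

/-- The graph `Q_n^k = K_{k,n-k-1} ⊔ Φ_{n-k,k+1}`: a vertex `inl x` with `x < k` is joined to
all of the right side, a vertex `inr y` with `y < n-k-1` is joined to all of the left side,
and there are no other edges. -/
def Qgraph (n k : ℕ) : SimpleGraph (Fin n ⊕ Fin n) :=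
  SimpleGraph.fromRel (fun a b =>
    match a, b with
    | Sum.inl x, Sum.inr y => x.val < k ∨ y.val < n - k - 1
    | _, _ => False)

/-- The graph `R_n^k = K_{k,k} ∪ K_{n-k,n-k}` (disjoint union). -/
def Rgraph (n k : ℕ) : SimpleGraph (Fin n ⊕ Fin n) :=
  SimpleGraph.fromRel (fun a b =>
    match a, b with
    | Sum.inl x, Sum.inr y => (x.val < k ∧ y.val < k) ∨ (k ≤ x.val ∧ k ≤ y.val)
    | _, _ => False)

/-- The graph `S_n^k = K_{k,n-k-1} ⊔ Φ_{n-k,k}` on parts of sizes `n` and `n-1`. -/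
def Sgraph (n k : ℕ) : SimpleGraph (Fin n ⊕ Fin (n - 1)) :=
  SimpleGraph.fromRel (fun a b =>
    match a, b with
    | Sum.inl x, Sum.inr y => x.val < k ∨ y.val < n - k - 1
    | _, _ => False)

/-- The quasi-complement of a bipartite graph: `inl x` and `inr y` are adjacent iff they are
nonadjacent in `G`; no edges inside the parts. -/
def quasiComplement {m n : ℕ} (G : SimpleGraph (Fin m ⊕ Fin n)) : SimpleGraph (Fin m ⊕ Fin n) :=
  SimpleGraph.fromRel (fun a b =>
    match a, b with
    | Sum.inl x, Sum.inr y => ¬ G.Adj (Sum.inl x) (Sum.inr y)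
    | _, _ => False)

/-- `G` is isomorphic to a subgraph of `H`. -/
def IsoSubgraph {V W : Type*} (G : SimpleGraph V) (H : SimpleGraph W) : Prop :=
  ∃ H' : SimpleGraph W, H' ≤ H ∧ Nonempty (G ≃g H')

section MoonMoserAux

open List

variable {V : Type*} {G : SimpleGraph V}


variable {V : Type*} {G : SimpleGraph V}

lemma exists_walk_of_chain :
    ∀ (l : List V) (x y : V), l.head? = some x → l.getLast? = some y →
      l.Chain' G.Adj → ∃ p : G.Walk x y, p.support = l := by
  intro l
  induction l with
  | nil => intro x y h; simp at h
  | cons a t ih =>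
    intro x y hh hl hc
    simp at hh; subst hh
    cases t with
    | nil =>
      simp at hl; subst hl
      exact ⟨SimpleGraph.Walk.nil, rfl⟩
    | cons b t' =>
      have hadj : G.Adj a b := (List.isChain_cons_cons.mp hc).1
      obtain ⟨p, hp⟩ := ih b y rfl (by simpa using hl) (List.isChain_cons_cons.mp hc).2
      exact ⟨SimpleGraph.Walk.cons hadj p, by simp [hp]⟩

lemma head_ne_getLast_of_nodup {l : List V} (hnd : l.Nodup) (hl : 2 ≤ l.length)
    (hne : l ≠ []) : l.head hne ≠ l.getLast hne := by
  cases l with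
  | nil => simp at hne
  | cons a t =>
    cases t with
    | nil => simp at hl
    | cons b t' =>
      have : (a :: b :: t').getLast (by simp) ∈ b :: t' := by
        rw [List.getLast_cons (by simp)]; exact List.getLast_mem _
      intro h
      rw [show (a :: b :: t').head hne = a from rfl] at h
      exact (List.nodup_cons.mp hnd).1 (h ▸ this)

lemma nodup_head_getLast {l : List V} (hnd : l.Nodup) (hne : l ≠ [])
    (h : l.head hne = l.getLast hne) : l.length = 1 := by
  by_contra hlen
  have h2 : 2 ≤ l.length := by
    rcases l with _ | ⟨a, t⟩
    · simp at hne
    · rcases t with _ | ⟨b, t'⟩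
      · simp at hlen
      · simp [Nat.succ_le_succ, Nat.le_add_left]
  exact head_ne_getLast_of_nodup hnd h2 hne h

lemma isHamiltonian_of_cycList [Fintype V] [DecidableEq V] (C : List V) (hne : C ≠ [])
    (hnd : C.Nodup) (hlen : 3 ≤ C.length) (hmem : ∀ v, v ∈ C)
    (hc : C.Chain' G.Adj) (hwrap : G.Adj (C.getLast hne) (C.head hne)) :
    G.IsHamiltonian := by
  set a := C.head hne with ha
  set z := C.getLast hne with hz
  obtain ⟨p, hp⟩ := exists_walk_of_chain (G := G) C a z
    (by rw [List.head?_eq_head hne]) (by rw [List.getLast?_eq_getLast hne]) hc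
  clear_value a z
  have hPath : p.IsPath := SimpleGraph.Walk.IsPath.mk' (by rw [hp]; exact hnd)
  have haz : a ≠ z := by rw [ha, hz]; exact head_ne_getLast_of_nodup hnd (by omega) hne
  have hedge : s(z, a) ∉ p.edges := by
    intro hmem'
    cases p with
    | nil => simp at hmem'
    | @cons _ v₁ _ hadj p' =>
      rw [SimpleGraph.Walk.edges_cons, List.mem_cons] at hmem'
      have hsupp : C = a :: p'.support := by
        rw [← hp]; rfl
      have hnd' : a ∉ p'.support := by
        rw [hsupp] at hnd; exact (List.nodup_cons.mp hnd).1
      rcases hmem' with h1 | h2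
      · have := Sym2.eq_iff.mp h1
        rcases this with ⟨h3, h4⟩ | ⟨h3, h4⟩
        · exact haz h3.symm
        · -- z = v₁
          subst h3
          -- p' : Walk z z with nodup support
          have hnds : p'.support.Nodup := by
            rw [hsupp] at hnd; exact (List.nodup_cons.mp hnd).2
          have h5 : p'.support.head (SimpleGraph.Walk.support_ne_nil _) = z :=
            SimpleGraph.Walk.head_support _
          have h6 : p'.support.getLast (SimpleGraph.Walk.support_ne_nil _) = z :=
            SimpleGraph.Walk.getLast_support _
          have h7 : p'.support.length = 1 :=
            nodup_head_getLast hnds _ (h5.trans h6.symm)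
          have : C.length = 2 := by rw [hsupp]; simp [h7]
          omega
      · exact hnd' (p'.snd_mem_support_of_mem_edges h2)
  have hcyc : (SimpleGraph.Walk.cons hwrap p).IsCycle :=
    (SimpleGraph.Walk.cons_isCycle_iff p hwrap).mpr ⟨hPath, hedge⟩
  intro _
  refine ⟨z, SimpleGraph.Walk.cons hwrap p, hcyc, ?_⟩
  intro v
  rw [SimpleGraph.Walk.support_tail_of_not_nil _ hcyc.not_nil]
  have : (SimpleGraph.Walk.cons hwrap p).support = z :: C := by
    rw [SimpleGraph.Walk.support_cons, hp]
  rw [this, List.tail_cons]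
  exact List.count_eq_one_of_mem hnd (hmem v)

open SimpleGraph.Walk in
lemma ham_path_of_cycle_edge [DecidableEq V] {a b : V} (hab : a ≠ b) (q : G.Walk a a)
    (hq : q.IsHamiltonianCycle) (he : s(a, b) ∈ q.edges) :
    ∃ r : G.Walk b a, r.IsHamiltonian ∧ s(a, b) ∉ r.edges ∧ ∀ e ∈ r.edges, e ∈ q.edges := by
  cases q with
  | nil => simp at he
  | @cons _ w _ h₁ r =>
    have hcyc := (SimpleGraph.Walk.cons_isCycle_iff r h₁).mp hq.isCycle
    obtain ⟨hrpath, hredge⟩ := hcyc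
    have hsupt : ∀ v, List.count v r.support = 1 := by
      intro v
      have h2 := hq.isHamiltonian_tail v
      rwa [SimpleGraph.Walk.support_tail_of_not_nil _ hq.isCycle.not_nil,
        SimpleGraph.Walk.support_cons, List.tail_cons] at h2
    rw [SimpleGraph.Walk.edges_cons, List.mem_cons] at he
    rcases he with he1 | he2
    · have hwb : w = b := (Sym2.congr_right.mp he1.symm)
      subst hwb
      exact ⟨r, hsupt, hredge, fun e hee => by
        rw [SimpleGraph.Walk.edges_cons]; exact List.mem_cons_of_mem _ hee⟩
    · have hwb : w ≠ b := fun h => by subst h; exact hredge he2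
      have hrev : s(a, b) ∈ r.reverse.edges := by
        rw [SimpleGraph.Walk.edges_reverse, List.mem_reverse]; exact he2
      have hnotnil : ¬r.reverse.Nil := by
        intro hnil
        have h0 : r.reverse.edges = [] := List.eq_nil_of_length_eq_zero
          (by rw [SimpleGraph.Walk.length_edges]
              exact SimpleGraph.Walk.nil_iff_length_eq.mp hnil)
        rw [h0] at hrev; simp at hrev
      obtain ⟨x, h₂, r'', hrr⟩ := SimpleGraph.Walk.not_nil_iff.mp hnotnil
      have hrevpath : r.reverse.IsPath := hrpath.reverse
      rw [hrr] at hrev hrevpath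
      have hxb : x = b := by
        rw [SimpleGraph.Walk.edges_cons, List.mem_cons] at hrev
        rcases hrev with h3 | h4
        · exact (Sym2.congr_right.mp h3.symm)
        · exfalso
          have : a ∈ r''.support := r''.fst_mem_support_of_mem_edges h4
          have hnd := hrevpath.support_nodup
          rw [SimpleGraph.Walk.support_cons] at hnd
          exact (List.nodup_cons.mp hnd).1 this
      subst hxb
      have hr''path : r''.IsPath := hrevpath.of_cons
      have hr''edge : s(a, x) ∉ r''.edges := by
        have hnd := hrevpath.isTrail.edges_nodup
        rw [SimpleGraph.Walk.edges_cons] at hnd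
        exact (List.nodup_cons.mp hnd).1
      refine ⟨r''.concat h₁.symm, ?_, ?_, ?_⟩
      · intro v
        have hrs : r.support = r''.support.reverse ++ [a] := by
          have h4 : r.reverse.support = a :: r''.support := by
            rw [hrr, SimpleGraph.Walk.support_cons]
          have h5 : r.support = r.reverse.support.reverse := by
            rw [SimpleGraph.Walk.support_reverse, List.reverse_reverse]
          rw [h5, h4]; simp
        have h6 := hsupt v
        rw [hrs] at h6
        rw [SimpleGraph.Walk.support_concat]
        simpa using h6
      · rw [SimpleGraph.Walk.edges_concat, List.concat_eq_append]
        intro hmem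
        rcases List.mem_append.mp hmem with h7 | h7
        · exact hr''edge h7
        · rw [List.mem_singleton] at h7
          rcases Sym2.eq_iff.mp h7 with ⟨h8, h9⟩ | ⟨h8, h9⟩
          · exact h₂.ne h9.symm
          · exact hwb h9.symm
      · intro e hee
        rw [SimpleGraph.Walk.edges_concat, List.concat_eq_append] at hee
        rw [SimpleGraph.Walk.edges_cons]
        rcases List.mem_append.mp hee with h7 | h7
        · apply List.mem_cons_of_mem
          have : e ∈ r.reverse.edges := by
            rw [hrr, SimpleGraph.Walk.edges_cons]; exact List.mem_cons_of_mem _ h7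
          rwa [SimpleGraph.Walk.edges_reverse, List.mem_reverse] at this
        · rw [List.mem_singleton] at h7
          rw [h7, Sym2.eq_swap]
          exact List.mem_cons_self

lemma rotate_isHamiltonianCycle [DecidableEq V] {c a : V} {q : G.Walk c c}
    (hq : q.IsHamiltonianCycle) (ha : a ∈ q.support) :
    (q.rotate a ha).IsHamiltonianCycle := by
  rw [SimpleGraph.Walk.isHamiltonianCycle_iff_isCycle_and_support_count_tail_eq_one] at hq ⊢
  refine ⟨hq.1.rotate ha, fun v => ?_⟩
  have hperm := (SimpleGraph.Walk.support_rotate q a ha).perm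
  rw [hperm.count_eq]
  exact hq.2 v

lemma ext_ham_path [Fintype V] [DecidableEq V] {H : SimpleGraph V} {a b : V} (hab : a ≠ b)
    (hham : (H ⊔ SimpleGraph.edge a b).IsHamiltonian) (hcard : Fintype.card V ≠ 1) :
    H.IsHamiltonian ∨ ∃ r : H.Walk b a, r.IsHamiltonian := by
  obtain ⟨c, q, hq⟩ := hham hcard
  have hedges : ∀ e ∈ q.edges, e ∈ H.edgeSet ∨ e = s(a, b) := by
    intro e hee
    have := q.edges_subset_edgeSet hee
    rw [SimpleGraph.edgeSet_sup, Set.mem_union, SimpleGraph.edge_edgeSet_of_ne hab] at this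
    exact this.imp id Set.mem_singleton_iff.mp
  by_cases hmem : s(a, b) ∈ q.edges
  · -- use the cycle rotated to a
    have ha : a ∈ q.support := q.fst_mem_support_of_mem_edges hmem
    have hq₁ := rotate_isHamiltonianCycle hq ha
    have hmem₁ : s(a, b) ∈ (q.rotate a ha).edges :=
      ((SimpleGraph.Walk.rotate_edges q a ha).mem_iff).mpr hmem
    obtain ⟨r, hrham, hredge, hrsub⟩ := ham_path_of_cycle_edge hab _ hq₁ hmem₁
    have hsub : ∀ e ∈ r.edges, e ∈ H.edgeSet := by
      intro e hee
      have h2 : e ∈ q.edges := ((SimpleGraph.Walk.rotate_edges q a ha).mem_iff).mp (hrsub e hee)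
      rcases hedges e h2 with h3 | h3
      · exact h3
      · exact absurd (h3 ▸ hee) hredge
    refine Or.inr ⟨r.transfer H hsub, ?_⟩
    intro v
    rw [SimpleGraph.Walk.support_transfer]
    exact hrham v
  · have hsub : ∀ e ∈ q.edges, e ∈ H.edgeSet := by
      intro e hee
      rcases hedges e hee with h3 | h3
      · exact h3
      · exact absurd (h3 ▸ hee) hmem
    refine Or.inl (fun _ => ⟨c, q.transfer H hsub, ?_⟩)
    rw [SimpleGraph.Walk.isHamiltonianCycle_iff_isCycle_and_support_count_tail_eq_one]
    refine ⟨hq.isCycle.transfer hsub, fun v => ?_⟩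
    rw [SimpleGraph.Walk.support_transfer]
    exact (SimpleGraph.Walk.isHamiltonianCycle_iff_isCycle_and_support_count_tail_eq_one.mp hq).2 v

attribute [local instance] Classical.propDecidable

lemma crossing_bound {n : ℕ} {H : SimpleGraph (Fin n ⊕ Fin n)} (hn : 2 ≤ n)
    (hb1 : ∀ x y : Fin n, ¬ H.Adj (Sum.inl x) (Sum.inl y))
    (hb2 : ∀ x y : Fin n, ¬ H.Adj (Sum.inr x) (Sum.inr y))
    (hnham : ¬H.IsHamiltonian) {x₀ y₀ : Fin n}
    (P : List (Fin n ⊕ Fin n)) (hnd : P.Nodup) (hmem : ∀ v, v ∈ P)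
    (hc : P.Chain' H.Adj) (hPne : P ≠ [])
    (hhead : P.head hPne = Sum.inl x₀) (hlast : P.getLast hPne = Sum.inr y₀) :
    H.degree (Sum.inl x₀) + H.degree (Sum.inr y₀) ≤ n := by
  set a := Sum.inl x₀ with hadef
  set b := Sum.inr y₀ with hbdef
  have hlen : P.length = n + n := by
    have h1 : P.toFinset = Finset.univ := Finset.eq_univ_iff_forall.mpr (by simpa using hmem)
    have h2 := List.toFinset_card_of_nodup hnd
    rw [h1] at h2
    simpa [Fintype.card_sum] using h2.symm
  have hex : ∀ v : Fin n ⊕ Fin n, ∃ i, ∃ hi : i < P.length, P[i]'hi = v := by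
    intro v
    have := hmem v
    rwa [List.mem_iff_getElem] at this
  choose idx hlt hget using hex
  set f : (Fin n ⊕ Fin n) → (Fin n ⊕ Fin n) := fun v => P.getD (idx v - 1) a with hfdef
  have hNA : ∀ v ∈ H.neighborFinset a, 1 ≤ idx v := by
    intro v hv
    rw [SimpleGraph.mem_neighborFinset] at hv
    by_contra h0
    have h0' : idx v = 0 := by omega
    have h3 := hget v
    simp_rw [h0'] at h3
    have hP0 : P[0]'(by omega) = a := by
      rw [List.getElem_zero]
      exact hhead
    exact H.ne_of_adj hv (hP0.symm.trans h3)
  have hfval : ∀ v, f v = P[idx v - 1]'(by have := hlt v; omega) := by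
    intro v
    exact List.getD_eq_getElem P a _
  have hfadj : ∀ v ∈ H.neighborFinset a, H.Adj (f v) v := by
    intro v hv
    have h1 := hNA v hv
    have h2 := hlt v
    have h3 : idx v - 1 < P.length - 1 := by omega
    have h4 := List.isChain_iff_getElem.mp hc (idx v - 1) (by omega)
    rw [hfval v]
    have h5 : idx v - 1 + 1 = idx v := by omega
    have h6 : P[idx v - 1 + 1]'(by omega) = v := by
      simp_rw [h5]
      exact hget v
    rw [h6] at h4
    exact h4
  set NA := H.neighborFinset a with hNAdef
  set NB := H.neighborFinset b with hNBdef
  set A' := NA.image f with hA'def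
  have hinj : Set.InjOn f NA := by
    intro v hv w hw hfvw
    have hv1 := hNA v hv
    have hw1 := hNA w hw
    rw [hfval v, hfval w] at hfvw
    have h7 := (hnd.getElem_inj_iff).mp hfvw
    have h8 : idx v = idx w := by omega
    rw [← hget v, ← hget w]
    simp_rw [h8]
  have hcardA' : A'.card = NA.card := Finset.card_image_of_injOn hinj
  have hdisj : Disjoint A' NB := by
    rw [Finset.disjoint_left]
    intro u huA huB
    obtain ⟨v, hv, hfv⟩ := Finset.mem_image.mp huA
    have hj1 := hNA v hv
    have hj2 := hlt v
    rw [SimpleGraph.mem_neighborFinset] at huB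
    have hvadj : H.Adj a v := (SimpleGraph.mem_neighborFinset _ _ _).mp hv
    set j := idx v with hjdef
    set T := P.take j with hTdef
    set S := P.drop j with hSdef
    have hTS : T ++ S = P := List.take_append_drop j P
    have hSne : S ≠ [] := by
      intro h
      have := congrArg List.length h
      simp [hSdef, hlen] at this
      omega
    have hTne : T ≠ [] := by
      intro h
      have := congrArg List.length h
      simp [hTdef, hlen] at this
      omega
    have hShead : S.head hSne = v := by
      have h9 : S.head? = some v := by
        rw [hSdef, List.head?_drop, List.getElem?_eq_getElem hj2]
        exact congrArg some (hget v)
      rw [List.head?_eq_head hSne] at h9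
      exact Option.some.inj h9
    have hSlast : S.getLast hSne = b := by
      have h9 : P.getLast? = some b := by rw [List.getLast?_eq_getLast hPne, hlast]
      rw [← hTS, List.getLast?_append_of_ne_nil _ hSne, List.getLast?_eq_getLast hSne] at h9
      exact Option.some.inj h9
    have hThead : T.head hTne = a := by
      have h9 : T.head? = some a := by
        rw [hTdef]
        rw [List.head?_eq_head (l := P.take j) (by rwa [← hTdef]), List.head_take]
        exact congrArg some hhead
      rw [List.head?_eq_head hTne] at h9
      exact Option.some.inj h9
    have hTlast : T.getLast hTne = u := by
      rw [List.getLast_eq_getElem]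
      have h5 : T.length - 1 = j - 1 := by
        simp only [hTdef, List.length_take]
        omega
      simp_rw [h5, hTdef, List.getElem_take]
      rw [← hfv]
      exact (hfval v).symm
    set C := S ++ T.reverse with hCdef
    have hCperm : C ~ P := by
      calc S ++ T.reverse ~ S ++ T := List.Perm.append_left S (List.reverse_perm T)
        _ ~ T ++ S := List.perm_append_comm
        _ = P := hTS
    have hCne : C ≠ [] := by
      intro h
      have h2 := hCperm.length_eq
      rw [h, hlen] at h2
      simp at h2
      omega
    have hCchain : C.Chain' H.Adj := by
      rw [hCdef, List.Chain', List.isChain_append]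
      refine ⟨hc.drop j, List.isChain_reverse.mpr ((hc.take j).imp fun x y h => h.symm), ?_⟩
      intro x hx y hy
      rw [List.getLast?_eq_getLast hSne, Option.mem_some_iff] at hx
      rw [List.head?_reverse, List.getLast?_eq_getLast hTne, Option.mem_some_iff] at hy
      rw [← hx, ← hy, hSlast, hTlast]
      exact huB
    have hCwrap : H.Adj (C.getLast hCne) (C.head hCne) := by
      have h7 : C.getLast hCne = a := by
        have h9 : C.getLast? = some a := by
          rw [hCdef, List.getLast?_append_of_ne_nil _ (by simpa using hTne),
            List.getLast?_reverse, List.head?_eq_head hTne]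
          exact congrArg some hThead
        rw [List.getLast?_eq_getLast hCne] at h9
        exact Option.some.inj h9
      have h8 : C.head hCne = v := by
        have h9 : C.head? = some v := by
          rw [hCdef, List.head?_append_of_ne_nil _ hSne, List.head?_eq_head hSne]
          exact congrArg some hShead
        rw [List.head?_eq_head hCne] at h9
        exact Option.some.inj h9
      rw [h7, h8]
      exact hvadj
    exact hnham (isHamiltonian_of_cycList C hCne (hCperm.nodup_iff.mpr hnd)
      (by rw [hCperm.length_eq, hlen]; omega)
      (fun w => (hCperm.mem_iff).mpr (hmem w)) hCchain hCwrap)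
  set Lset := (Finset.univ : Finset (Fin n)).image (Sum.inl : Fin n → Fin n ⊕ Fin n) with hLdef
  have hLcard : Lset.card = n := by
    rw [hLdef, Finset.card_image_of_injective _ Sum.inl_injective, Finset.card_univ,
      Fintype.card_fin]
  have hisinl : ∀ u : Fin n ⊕ Fin n, (∃ z, u = Sum.inl z) → u ∈ Lset := by
    rintro u ⟨z, rfl⟩
    exact Finset.mem_image.mpr ⟨z, Finset.mem_univ z, rfl⟩
  have hA'L : A' ⊆ Lset := by
    intro u hu
    obtain ⟨v, hv, hfv⟩ := Finset.mem_image.mp hu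
    have hadj := hfadj v hv
    have hvadj : H.Adj a v := (SimpleGraph.mem_neighborFinset _ _ _).mp hv
    apply hisinl
    rw [← hfv]
    cases hw : v with
    | inl z => exact absurd (hw ▸ hvadj) (hb1 x₀ z)
    | inr z =>
      cases hw2 : f v with
      | inl w => exact ⟨w, hw ▸ hw2⟩
      | inr w => exact absurd (hw2 ▸ hw ▸ hadj) (hb2 w z)
  have hNBL : NB ⊆ Lset := by
    intro u hu
    have huadj : H.Adj b u := (SimpleGraph.mem_neighborFinset _ _ _).mp hu
    apply hisinl
    cases hw : u with
    | inl z => exact ⟨z, rfl⟩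
    | inr z => exact absurd (hw ▸ huadj) (hb2 y₀ z)
  have hfinal : A'.card + NB.card ≤ n := by
    rw [← Finset.card_union_of_disjoint hdisj]
    exact le_trans (Finset.card_le_card (Finset.union_subset hA'L hNBL)) (le_of_eq hLcard)
  rw [hcardA'] at hfinal
  have hda : H.degree a = NA.card := (H.card_neighborFinset_eq_degree a).symm
  have hdb : H.degree b = NB.card := (H.card_neighborFinset_eq_degree b).symm
  rw [hda, hdb]
  omega

lemma ham_of_complete {n : ℕ} (hn : 2 ≤ n) {H : SimpleGraph (Fin n ⊕ Fin n)}
    (hall : ∀ x y : Fin n, H.Adj (Sum.inl x) (Sum.inr y)) : H.IsHamiltonian := by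
  have h2n : ∀ k, k < 2 * n → k / 2 < n := fun k h => by omega
  set f : Fin (2 * n) → Fin n ⊕ Fin n := fun k =>
    if k.val % 2 = 0 then Sum.inl ⟨k.val / 2, h2n _ k.isLt⟩ else Sum.inr ⟨k.val / 2, h2n _ k.isLt⟩
    with hfdef
  set C := List.ofFn f with hCdef
  have hlen : C.length = 2 * n := by simp [hCdef]
  have hCne : C ≠ [] := by
    intro h; rw [h] at hlen; simp at hlen; omega
  have hgetC : ∀ (i : ℕ) (hi : i < 2 * n), C[i]'(by omega) = f ⟨i, hi⟩ := by
    intro i hi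
    simp [hCdef]
  have hinj : Function.Injective f := by
    intro i j hij
    rw [hfdef] at hij
    simp only at hij
    apply Fin.ext
    by_cases hi : i.val % 2 = 0 <;> by_cases hj : j.val % 2 = 0
    · rw [if_pos hi, if_pos hj] at hij
      have h3 : i.val / 2 = j.val / 2 := congrArg Fin.val (Sum.inl.inj hij)
      omega
    · rw [if_pos hi, if_neg hj] at hij
      exact absurd hij (by simp)
    · rw [if_neg hi, if_pos hj] at hij
      exact absurd hij (by simp)
    · rw [if_neg hi, if_neg hj] at hij
      have h3 : i.val / 2 = j.val / 2 := congrArg Fin.val (Sum.inr.inj hij)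
      omega
  refine isHamiltonian_of_cycList C hCne ((List.nodup_ofFn).mpr hinj) (by omega) ?_ ?_ ?_
  · intro v
    rw [hCdef, List.mem_ofFn]
    rcases v with x | x
    · refine ⟨⟨2 * x.val, by omega⟩, ?_⟩
      simp only [hfdef]
      rw [if_pos (by omega)]
      congr 1
      apply Fin.ext
      simp only []
      show 2 * x.val / 2 = x.val
      omega
    · refine ⟨⟨2 * x.val + 1, by omega⟩, ?_⟩
      simp only [hfdef]
      rw [if_neg (by omega)]
      congr 1
      apply Fin.ext
      show (2 * x.val + 1) / 2 = x.val
      omega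
  · rw [List.Chain', List.isChain_iff_getElem]
    intro i hi
    rw [hlen] at hi
    rw [hgetC i (by omega), hgetC (i+1) (by omega)]
    rw [hfdef]
    by_cases hpar : i % 2 = 0
    · have : (i + 1) % 2 ≠ 0 := by omega
      simp only [hpar, this, if_true, if_false, if_neg this]
      exact hall _ _
    · have : (i + 1) % 2 = 0 := by omega
      simp only [hpar, this, if_false, if_true, if_neg hpar, if_pos this]
      exact (hall _ _).symm
  · have hL : C.getLast hCne = f ⟨2 * n - 1, by omega⟩ := by
      rw [List.getLast_eq_getElem]
      have : C.length - 1 = 2 * n - 1 := by omega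
      simp_rw [this]
      exact hgetC _ (by omega)
    have hH : C.head hCne = f ⟨0, by omega⟩ := by
      rw [← List.getElem_zero (by omega)]
      exact hgetC _ (by omega)
    rw [hL, hH, hfdef]
    have h1 : (2 * n - 1) % 2 ≠ 0 := by omega
    simp only [if_neg h1, if_pos (by omega : (0 : ℕ) % 2 = 0)]
    exact (hall _ _).symm

lemma key_nonadj {n : ℕ} (hn : 2 ≤ n) {H : SimpleGraph (Fin n ⊕ Fin n)}
    (hb1 : ∀ x y : Fin n, ¬ H.Adj (Sum.inl x) (Sum.inl y))
    (hb2 : ∀ x y : Fin n, ¬ H.Adj (Sum.inr x) (Sum.inr y))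
    (hnham : ¬H.IsHamiltonian)
    (hmax : ∀ x y : Fin n, ¬H.Adj (Sum.inl x) (Sum.inr y) →
      (H ⊔ SimpleGraph.edge (Sum.inl x) (Sum.inr y)).IsHamiltonian)
    {x y : Fin n} (hnadj : ¬H.Adj (Sum.inl x) (Sum.inr y)) :
    H.degree (Sum.inl x) + H.degree (Sum.inr y) ≤ n := by
  have hab : (Sum.inl x : Fin n ⊕ Fin n) ≠ Sum.inr y := by simp
  have hcard : Fintype.card (Fin n ⊕ Fin n) ≠ 1 := by
    simp [Fintype.card_sum]; omega
  rcases ext_ham_path hab (hmax x y hnadj) hcard with h | ⟨r, hr⟩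
  · exact absurd h hnham
  · set P := r.reverse.support with hPdef
    have hPne : P ≠ [] := SimpleGraph.Walk.support_ne_nil _
    refine crossing_bound hn hb1 hb2 hnham P ?_ ?_ ?_ hPne ?_ ?_
    · exact (hr.isPath.reverse).support_nodup
    · intro v
      rw [hPdef, SimpleGraph.Walk.support_reverse, List.mem_reverse]
      exact hr.mem_support v
    · exact SimpleGraph.Walk.isChain_adj_support _
    · exact SimpleGraph.Walk.head_support _
    · exact SimpleGraph.Walk.getLast_support _

lemma g_bound {n k d : ℕ} (hk : k ≤ d) (hdn : d + k ≤ n) :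
    d * n + (n - d) * (n - d) ≤ n * (n - k) + k * k := by
  have h1 : d ≤ n := by omega
  have h2 : k ≤ n := by omega
  zify [h1, h2]
  have e1 : (0:ℤ) ≤ (d : ℤ) - k := by
    have := hk; omega
  have e2 : (0:ℤ) ≤ (n : ℤ) - d - k := by
    have := hdn; omega
  nlinarith [mul_nonneg e1 e2]

lemma deg_le_n {n : ℕ} {H : SimpleGraph (Fin n ⊕ Fin n)}
    (hb1 : ∀ x y : Fin n, ¬ H.Adj (Sum.inl x) (Sum.inl y))
    (hb2 : ∀ x y : Fin n, ¬ H.Adj (Sum.inr x) (Sum.inr y)) :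
    ∀ v, H.degree v ≤ n := by
  intro v
  rw [← SimpleGraph.card_neighborFinset_eq_degree]
  rcases v with x | x
  · have hsub : H.neighborFinset (Sum.inl x) ⊆
        (Finset.univ : Finset (Fin n)).image (Sum.inr : Fin n → Fin n ⊕ Fin n) := by
      intro w hw
      have hadj : H.Adj (Sum.inl x) w := (SimpleGraph.mem_neighborFinset _ _ _).mp hw
      rcases w with z | z
      · exact absurd hadj (hb1 x z)
      · exact Finset.mem_image.mpr ⟨z, Finset.mem_univ z, rfl⟩
    calc (H.neighborFinset (Sum.inl x)).card ≤ _ := Finset.card_le_card hsub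
      _ = n := by rw [Finset.card_image_of_injective _ Sum.inr_injective]; simp
  · have hsub : H.neighborFinset (Sum.inr x) ⊆
        (Finset.univ : Finset (Fin n)).image (Sum.inl : Fin n → Fin n ⊕ Fin n) := by
      intro w hw
      have hadj : H.Adj (Sum.inr x) w := (SimpleGraph.mem_neighborFinset _ _ _).mp hw
      rcases w with z | z
      · exact Finset.mem_image.mpr ⟨z, Finset.mem_univ z, rfl⟩
      · exact absurd hadj (hb2 x z)
    calc (H.neighborFinset (Sum.inr x)).card ≤ _ := Finset.card_le_card hsub
      _ = n := by rw [Finset.card_image_of_injective _ Sum.inl_injective]; simp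

lemma side_sum_bound {n : ℕ} {H : SimpleGraph (Fin n ⊕ Fin n)}
    (hb1 : ∀ x y : Fin n, ¬ H.Adj (Sum.inl x) (Sum.inl y))
    (hb2 : ∀ x y : Fin n, ¬ H.Adj (Sum.inr x) (Sum.inr y))
    {y : Fin n}
    (hpairy : ∀ x : Fin n, ¬H.Adj (Sum.inl x) (Sum.inr y) →
        H.degree (Sum.inl x) + H.degree (Sum.inr y) ≤ n) :
    ∑ z : Fin n, H.degree (Sum.inl z) ≤
      H.degree (Sum.inr y) * n + (n - H.degree (Sum.inr y)) * (n - H.degree (Sum.inr y)) := by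
  classical
  set t := H.degree (Sum.inr y) with htdef
  set filt := Finset.univ.filter (fun z : Fin n => H.Adj (Sum.inl z) (Sum.inr y)) with hfiltdef
  have hcardfilt : filt.card = t := by
    have himg : H.neighborFinset (Sum.inr y) = filt.image (Sum.inl : Fin n → Fin n ⊕ Fin n) := by
      ext w
      rcases w with z | z
      · simp only [SimpleGraph.mem_neighborFinset, Finset.mem_image, hfiltdef,
          Finset.mem_filter, Finset.mem_univ, true_and]
        constructor
        · intro h
          exact ⟨z, h.symm, rfl⟩
        · rintro ⟨z', hz', hz2⟩
          cases Sum.inl_injective hz2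
          exact hz'.symm
      · simp only [SimpleGraph.mem_neighborFinset, Finset.mem_image]
        constructor
        · intro h
          exact absurd h (hb2 y z)
        · rintro ⟨z', _, hz2⟩
          simp at hz2
    rw [htdef, ← SimpleGraph.card_neighborFinset_eq_degree, himg,
      Finset.card_image_of_injective _ Sum.inl_injective]
  have hsplit : (Finset.univ : Finset (Fin n)) = filt ∪ filtᶜ := by
    simp [Finset.union_compl]
  have hsum : ∑ z : Fin n, H.degree (Sum.inl z)
      = ∑ z ∈ filt, H.degree (Sum.inl z) + ∑ z ∈ filtᶜ, H.degree (Sum.inl z) := by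
    rw [← Finset.sum_union (disjoint_compl_right), ← hsplit]
  rw [hsum]
  have h1 : ∑ z ∈ filt, H.degree (Sum.inl z) ≤ t * n := by
    calc ∑ z ∈ filt, H.degree (Sum.inl z) ≤ ∑ _z ∈ filt, n :=
          Finset.sum_le_sum (fun z _ => deg_le_n hb1 hb2 _)
      _ = filt.card * n := by rw [Finset.sum_const, smul_eq_mul]
      _ = t * n := by rw [hcardfilt]
  have h2 : ∑ z ∈ filtᶜ, H.degree (Sum.inl z) ≤ (n - t) * (n - t) := by
    have hcardc : filtᶜ.card = n - t := by
      rw [Finset.card_compl, hcardfilt]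
      simp
    calc ∑ z ∈ filtᶜ, H.degree (Sum.inl z) ≤ ∑ _z ∈ filtᶜ, (n - t) := by
          apply Finset.sum_le_sum
          intro z hz
          rw [hfiltdef] at hz
          simp only [Finset.mem_compl, Finset.mem_filter, Finset.mem_univ, true_and] at hz
          have := hpairy z hz
          omega
      _ = filtᶜ.card * (n - t) := by rw [Finset.sum_const, smul_eq_mul]
      _ = (n - t) * (n - t) := by rw [hcardc]
  omega

lemma side_sum_bound_right {n : ℕ} {H : SimpleGraph (Fin n ⊕ Fin n)}
    (hb1 : ∀ x y : Fin n, ¬ H.Adj (Sum.inl x) (Sum.inl y))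
    (hb2 : ∀ x y : Fin n, ¬ H.Adj (Sum.inr x) (Sum.inr y))
    {x : Fin n}
    (hpairx : ∀ y : Fin n, ¬H.Adj (Sum.inl x) (Sum.inr y) →
        H.degree (Sum.inl x) + H.degree (Sum.inr y) ≤ n) :
    ∑ z : Fin n, H.degree (Sum.inr z) ≤
      H.degree (Sum.inl x) * n + (n - H.degree (Sum.inl x)) * (n - H.degree (Sum.inl x)) := by
  classical
  set s := H.degree (Sum.inl x) with hsdef
  set filt := Finset.univ.filter (fun z : Fin n => H.Adj (Sum.inl x) (Sum.inr z)) with hfiltdef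
  have hcardfilt : filt.card = s := by
    have himg : H.neighborFinset (Sum.inl x) = filt.image (Sum.inr : Fin n → Fin n ⊕ Fin n) := by
      ext w
      rcases w with z | z
      · simp only [SimpleGraph.mem_neighborFinset, Finset.mem_image]
        constructor
        · intro h
          exact absurd h (hb1 x z)
        · rintro ⟨z', _, hz2⟩
          simp at hz2
      · simp only [SimpleGraph.mem_neighborFinset, Finset.mem_image, hfiltdef,
          Finset.mem_filter, Finset.mem_univ, true_and]
        constructor
        · intro h
          exact ⟨z, h, rfl⟩
        · rintro ⟨z', hz', hz2⟩
          cases Sum.inr_injective hz2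
          exact hz'
    rw [hsdef, ← SimpleGraph.card_neighborFinset_eq_degree, himg,
      Finset.card_image_of_injective _ Sum.inr_injective]
  have hsum : ∑ z : Fin n, H.degree (Sum.inr z)
      = ∑ z ∈ filt, H.degree (Sum.inr z) + ∑ z ∈ filtᶜ, H.degree (Sum.inr z) := by
    rw [← Finset.sum_union disjoint_compl_right]
    congr 1
    simp [Finset.union_compl]
  rw [hsum]
  have h1 : ∑ z ∈ filt, H.degree (Sum.inr z) ≤ s * n := by
    calc ∑ z ∈ filt, H.degree (Sum.inr z) ≤ ∑ _z ∈ filt, n :=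
          Finset.sum_le_sum (fun z _ => deg_le_n hb1 hb2 _)
      _ = filt.card * n := by rw [Finset.sum_const, smul_eq_mul]
      _ = s * n := by rw [hcardfilt]
  have h2 : ∑ z ∈ filtᶜ, H.degree (Sum.inr z) ≤ (n - s) * (n - s) := by
    have hcardc : filtᶜ.card = n - s := by
      rw [Finset.card_compl, hcardfilt]
      simp
    calc ∑ z ∈ filtᶜ, H.degree (Sum.inr z) ≤ ∑ _z ∈ filtᶜ, (n - s) := by
          apply Finset.sum_le_sum
          intro z hz
          rw [hfiltdef] at hz
          simp only [Finset.mem_compl, Finset.mem_filter, Finset.mem_univ, true_and] at hz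
          have := hpairx z hz
          omega
      _ = filtᶜ.card * (n - s) := by rw [Finset.sum_const, smul_eq_mul]
      _ = (n - s) * (n - s) := by rw [hcardc]
  omega

lemma count_edges {n k : ℕ} {H : SimpleGraph (Fin n ⊕ Fin n)}
    (hb1 : ∀ x y : Fin n, ¬ H.Adj (Sum.inl x) (Sum.inl y))
    (hb2 : ∀ x y : Fin n, ¬ H.Adj (Sum.inr x) (Sum.inr y))
    (hdeg : ∀ v, k ≤ H.degree v)
    (hpair : ∀ x y : Fin n, ¬H.Adj (Sum.inl x) (Sum.inr y) →
        H.degree (Sum.inl x) + H.degree (Sum.inr y) ≤ n)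
    {x y : Fin n} (hnadj : ¬H.Adj (Sum.inl x) (Sum.inr y)) :
    H.edgeFinset.card ≤ n * (n - k) + k * k := by
  classical
  set s := H.degree (Sum.inl x) with hsdef
  set t := H.degree (Sum.inr y) with htdef
  have hst : s + t ≤ n := hpair x y hnadj
  have hks : k ≤ s := hdeg _
  have hkt : k ≤ t := hdeg _
  have hsumL := side_sum_bound hb1 hb2 (fun z hz => hpair z y hz)
  have hsumR := side_sum_bound_right hb1 hb2 (fun z hz => hpair x z hz)
  have htwice : ∑ v, H.degree v = 2 * H.edgeFinset.card :=
    SimpleGraph.sum_degrees_eq_twice_card_edges H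
  rw [Fintype.sum_sum_type] at htwice
  have hgL : ∑ z : Fin n, H.degree (Sum.inl z) ≤ n * (n - k) + k * k := by
    refine le_trans hsumL (le_trans (le_of_eq ?_) (g_bound hkt (by omega)))
    ring
  have hgR : ∑ z : Fin n, H.degree (Sum.inr z) ≤ n * (n - k) + k * k :=
    le_trans hsumR (g_bound hks (by omega))
  set M := n * (n - k) + k * k with hM
  omega

lemma degree_mono {V : Type*} [Fintype V] {G H : SimpleGraph V} (h : G ≤ H) (v : V)
    [Fintype (G.neighborSet v)] [Fintype (H.neighborSet v)] :
    G.degree v ≤ H.degree v := by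
  rw [← SimpleGraph.card_neighborFinset_eq_degree, ← SimpleGraph.card_neighborFinset_eq_degree]
  apply Finset.card_le_card
  intro w hw
  rw [SimpleGraph.mem_neighborFinset] at hw ⊢
  exact h hw


end MoonMoserAux

/-- Moon–Moser: a balanced bipartite graph on `2n` vertices with `δ(G) ≥ k`, `1 ≤ k ≤ n/2` and
`e(G) > max{n(n-k)+k², n(n-⌊n/2⌋)+⌊n/2⌋²}` is Hamiltonian. -/
theorem stmt_1 (n k : ℕ) (G : SimpleGraph (Fin n ⊕ Fin n)) (hbip : CrossOnly G)
    (hk1 : 1 ≤ k) (hk2 : k ≤ n / 2) (hdeg : ∀ v, k ≤ G.degree v)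
    (he : max (n * (n - k) + k ^ 2) (n * (n - n / 2) + (n / 2) ^ 2) < G.edgeFinset.card) :
    G.IsHamiltonian := by
  by_contra hham
  have hn2 : 2 ≤ n := by omega
  set S : Set (SimpleGraph (Fin n ⊕ Fin n)) :=
    {H | G ≤ H ∧ CrossOnly H ∧ ¬H.IsHamiltonian} with hSdef
  have hGS : G ∈ S := ⟨le_refl G, hbip, hham⟩
  obtain ⟨H, hHS, hHmax⟩ := Set.exists_max_image S (fun H => H.edgeSet.ncard)
    (Set.toFinite S) ⟨G, hGS⟩
  obtain ⟨hGH, ⟨hb1, hb2⟩, hnham⟩ := hHS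
  -- maximality consequence
  have hmaxprop : ∀ x y : Fin n, ¬H.Adj (Sum.inl x) (Sum.inr y) →
      (H ⊔ SimpleGraph.edge (Sum.inl x) (Sum.inr y)).IsHamiltonian := by
    intro x y hnadj
    by_contra hnh
    set H' := H ⊔ SimpleGraph.edge (Sum.inl x) (Sum.inr y) with hH'def
    have hH'S : H' ∈ S := by
      refine ⟨le_trans hGH le_sup_left, ⟨?_, ?_⟩, hnh⟩
      · intro x' y' hadj
        rw [hH'def, SimpleGraph.sup_adj] at hadj
        rcases hadj with h | h
        · exact hb1 x' y' h
        · rw [SimpleGraph.edge_adj] at h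
          rcases h.1 with ⟨h1, h2⟩ | ⟨h1, h2⟩ <;> simp at h1 h2
      · intro x' y' hadj
        rw [hH'def, SimpleGraph.sup_adj] at hadj
        rcases hadj with h | h
        · exact hb2 x' y' h
        · rw [SimpleGraph.edge_adj] at h
          rcases h.1 with ⟨h1, h2⟩ | ⟨h1, h2⟩ <;> simp at h1 h2
    have hlt : H < H' := by
      constructor
      · exact le_sup_left
      · intro hle
        apply hnadj
        have : (SimpleGraph.edge (Sum.inl x) (Sum.inr y) : SimpleGraph (Fin n ⊕ Fin n)) ≤ H :=
          le_trans le_sup_right hle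
        apply this
        rw [SimpleGraph.edge_adj]
        exact ⟨Or.inl ⟨rfl, rfl⟩, by simp⟩
    have hcards := hHmax H' hH'S
    have hlt2 : H.edgeSet.ncard < H'.edgeSet.ncard :=
      Set.ncard_lt_ncard (SimpleGraph.edgeSet_ssubset_edgeSet.mpr hlt) (Set.toFinite _)
    omega
  -- either complete or has a nonadjacent pair
  by_cases hcomp : ∀ x y : Fin n, H.Adj (Sum.inl x) (Sum.inr y)
  · exact hnham (ham_of_complete hn2 hcomp)
  · push_neg at hcomp
    obtain ⟨x, y, hnadj⟩ := hcomp
    have hpair : ∀ x' y' : Fin n, ¬H.Adj (Sum.inl x') (Sum.inr y') →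
        H.degree (Sum.inl x') + H.degree (Sum.inr y') ≤ n := by
      intro x' y' hna
      exact key_nonadj hn2 hb1 hb2 hnham hmaxprop hna
    have hdegH : ∀ v, k ≤ H.degree v := fun v => le_trans (hdeg v) (degree_mono hGH v)
    have hcount := count_edges hb1 hb2 hdegH hpair hnadj
    have hmono : G.edgeFinset.card ≤ H.edgeFinset.card := by
      have h1 : G.edgeSet.ncard ≤ H.edgeSet.ncard :=
        Set.ncard_le_ncard (SimpleGraph.edgeSet_subset_edgeSet.mpr hGH) (Set.toFinite _)
      have h2 : G.edgeSet.ncard = G.edgeFinset.card := by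
        rw [SimpleGraph.edgeFinset, Set.ncard_eq_toFinset_card']
      have h3 : H.edgeSet.ncard = H.edgeFinset.card := by
        rw [SimpleGraph.edgeFinset, Set.ncard_eq_toFinset_card']
      omega
    have hmax1 : n * (n - k) + k ^ 2 < G.edgeFinset.card := lt_of_le_of_lt (le_max_left _ _) he
    have hkk : k ^ 2 = k * k := sq k
    omega
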